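/- The set of D-finite formal power series over ℂ is closed under multiplication: if f and g are D-finite formal power series, then the product f·g is D-finite. Moreover, if f satisfies an equation of order r and g one of order s, then f·g satisfies a linear differential equation with polynomial coefficients of order at most r·s. -/
import Mathlib

open PowerSeries

noncomputable section
namespace DFA

local notation "PS" => PowerSeries ℂ

lemma coe_neg' (p : Polynomial ℂ) : ((-p : Polynomial ℂ) : PS) = -(p : PS) := by
  rw [← Polynomial.coeToPowerSeries.ringHom_apply, map_neg,
    Polynomial.coeToPowerSeries.ringHom_apply]

lemma coe_sub' (p q : Polynomial ℂ) : ((p - q : Polynomial ℂ) : PS) = (p : PS) - (q : PS) := by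
  rw [← Polynomial.coeToPowerSeries.ringHom_apply, map_sub,
    Polynomial.coeToPowerSeries.ringHom_apply, Polynomial.coeToPowerSeries.ringHom_apply]

lemma deriv_coe_mul (p : Polynomial ℂ) (x : PS) :
    d⁄dX ℂ ((p : PS) * x)
      = ((Polynomial.derivative p : Polynomial ℂ) : PS) * x + (p : PS) * d⁄dX ℂ x := by
  rw [Derivation.leibniz, smul_eq_mul, smul_eq_mul, PowerSeries.derivative_coe]
  ring



lemma reduce (m : ℕ) (F : ℕ → PS) (A : Polynomial ℂ) (aa : Fin (m + 1) → Polynomial ℂ)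
    (hA : (A : PS) * F (m + 1) = ∑ i : Fin (m + 1), (aa i : PS) * F i)
    (c : Fin (m + 1) → Polynomial ℂ) :
    ∃ d : Fin (m + 1) → Polynomial ℂ,
      (A : PS) * ∑ i : Fin (m + 1), (c i : PS) * F ((i : ℕ) + 1)
        = ∑ i : Fin (m + 1), (d i : PS) * F i := by
  refine ⟨fun i => c (Fin.last m) * aa i + Fin.cases 0 (fun i' => A * c i'.castSucc) i, ?_⟩
  rw [Fin.sum_univ_castSucc (f := fun i : Fin (m+1) => (c i : PS) * F ((i : ℕ) + 1))]
  simp only [Fin.coe_castSucc, Fin.val_last, mul_add,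
    Polynomial.coe_add, Polynomial.coe_mul, add_mul, Finset.sum_add_distrib]
  rw [Fin.sum_univ_succ
    (f := fun i : Fin (m+1) => ((Fin.cases 0 (fun i' => A * c i'.castSucc) i : Polynomial ℂ) : PS) * F i)]
  simp only [Fin.cases_zero, Fin.cases_succ, Polynomial.coe_zero, zero_mul, zero_add,
    Polynomial.coe_mul, Fin.val_succ]
  rw [show (A:PS) * (((c (Fin.last m) : PS)) * F (m+1)) = ((c (Fin.last m):PS)) * ((A:PS) * F (m+1)) by ring, hA, add_comm]
  congr 1
  · rw [Finset.mul_sum]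
    exact Finset.sum_congr rfl fun i _ => by ring
  · rw [Finset.mul_sum]
    exact Finset.sum_congr rfl fun i _ => by ring

lemma mul_dsum {m n : ℕ} (F G : ℕ → PS) (c : Polynomial ℂ)
    (e : Fin (m + 1) → Fin (n + 1) → Polynomial ℂ) :
    (c : PS) * ∑ i : Fin (m+1), ∑ j : Fin (n+1), (e i j : PS) * (F i * G j)
      = ∑ i : Fin (m+1), ∑ j : Fin (n+1), ((c * e i j : Polynomial ℂ) : PS) * (F i * G j) := by
  simp only [Finset.mul_sum, Polynomial.coe_mul, mul_assoc]

lemma stepMul (m n : ℕ) (F G : ℕ → PS)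
    (hF : ∀ i, F (i + 1) = d⁄dX ℂ (F i)) (hG : ∀ j, G (j + 1) = d⁄dX ℂ (G j))
    (A B : Polynomial ℂ) (aa : Fin (m + 1) → Polynomial ℂ) (bb : Fin (n + 1) → Polynomial ℂ)
    (hA : (A : PS) * F (m + 1) = ∑ i : Fin (m + 1), (aa i : PS) * F i)
    (hB : (B : PS) * G (n + 1) = ∑ j : Fin (n + 1), (bb j : PS) * G j)
    (Q : Polynomial ℂ) (R : Fin (m + 1) → Fin (n + 1) → Polynomial ℂ) (x : PS)
    (hx : (Q : PS) * x = ∑ i : Fin (m + 1), ∑ j : Fin (n + 1), (R i j : PS) * (F i * G j)) :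
    ∃ R' : Fin (m + 1) → Fin (n + 1) → Polynomial ℂ,
      ((A * B * Q * Q : Polynomial ℂ) : PS) * d⁄dX ℂ x
        = ∑ i : Fin (m+1), ∑ j : Fin (n+1), (R' i j : PS) * (F i * G j) := by
  have key : ((Polynomial.derivative Q : Polynomial ℂ) : PS) * x + (Q : PS) * d⁄dX ℂ x =
      (∑ i : Fin (m+1), ∑ j : Fin (n+1), ((Polynomial.derivative (R i j) : Polynomial ℂ) : PS) * (F i * G j)) +
      ((∑ i : Fin (m+1), ∑ j : Fin (n+1), (R i j : PS) * (F ((i:ℕ)+1) * G j)) +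
       (∑ i : Fin (m+1), ∑ j : Fin (n+1), (R i j : PS) * (F i * G ((j:ℕ)+1)))) := by
    have hx' := congrArg (d⁄dX ℂ) hx
    rw [deriv_coe_mul] at hx'
    rw [map_sum] at hx'
    have hterm : ∀ (i : Fin (m+1)) (j : Fin (n+1)),
        d⁄dX ℂ (∑ j : Fin (n+1), (R i j : PS) * (F i * G j)) =
        ∑ j : Fin (n+1), (((Polynomial.derivative (R i j) : Polynomial ℂ) : PS) * (F i * G j)
          + ((R i j : PS) * (F ((i:ℕ)+1) * G j) + (R i j : PS) * (F i * G ((j:ℕ)+1)))) := by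
      intro i j
      rw [map_sum]
      refine Finset.sum_congr rfl fun j' _ => ?_
      rw [deriv_coe_mul, Derivation.leibniz, smul_eq_mul, smul_eq_mul, ← hF, ← hG]
      ring
    rw [Finset.sum_congr rfl fun i _ => hterm i 0] at hx'
    rw [hx']
    simp only [Finset.sum_add_distrib]
  -- h2
  obtain ⟨dF, hdF⟩ : ∃ dF : Fin (m+1) → Fin (n+1) → Polynomial ℂ,
      (A : PS) * (∑ i : Fin (m+1), ∑ j : Fin (n+1), (R i j : PS) * (F ((i:ℕ)+1) * G j))
        = ∑ i : Fin (m+1), ∑ j : Fin (n+1), (dF i j : PS) * (F i * G j) := by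
    choose d hd using fun j : Fin (n+1) => reduce m F A aa hA (fun i => R i j)
    refine ⟨fun i j => d j i, ?_⟩
    rw [Finset.sum_comm, Finset.mul_sum, Finset.sum_comm]
    refine Finset.sum_congr rfl fun j _ => ?_
    calc (A:PS) * ∑ i : Fin (m+1), (R i j : PS) * (F ((i:ℕ)+1) * G j)
        = ((A:PS) * ∑ i : Fin (m+1), (R i j : PS) * F ((i:ℕ)+1)) * G j := by
          simp only [Finset.mul_sum, Finset.sum_mul]
          exact Finset.sum_congr rfl fun i _ => by ring
      _ = (∑ i : Fin (m+1), (d j i : PS) * F i) * G j := by rw [hd j]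
      _ = ∑ i : Fin (m+1), (d j i : PS) * (F i * G j) := by
          rw [Finset.sum_mul]; exact Finset.sum_congr rfl fun i _ => by ring
  -- h3
  obtain ⟨dG, hdG⟩ : ∃ dG : Fin (m+1) → Fin (n+1) → Polynomial ℂ,
      (B : PS) * (∑ i : Fin (m+1), ∑ j : Fin (n+1), (R i j : PS) * (F i * G ((j:ℕ)+1)))
        = ∑ i : Fin (m+1), ∑ j : Fin (n+1), (dG i j : PS) * (F i * G j) := by
    choose d hd using fun i : Fin (m+1) => reduce n G B bb hB (fun j => R i j)
    refine ⟨fun i j => d i j, ?_⟩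
    rw [Finset.mul_sum]
    refine Finset.sum_congr rfl fun i _ => ?_
    calc (B:PS) * ∑ j : Fin (n+1), (R i j : PS) * (F i * G ((j:ℕ)+1))
        = ((B:PS) * ∑ j : Fin (n+1), (R i j : PS) * G ((j:ℕ)+1)) * F i := by
          simp only [Finset.mul_sum, Finset.sum_mul]
          exact Finset.sum_congr rfl fun j _ => by ring
      _ = (∑ j : Fin (n+1), (d i j : PS) * G j) * F i := by rw [hd i]
      _ = ∑ j : Fin (n+1), (d i j : PS) * (F i * G j) := by
          rw [Finset.sum_mul]; exact Finset.sum_congr rfl fun j _ => by ring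
  refine ⟨fun i j => A*B*Q*(Polynomial.derivative (R i j)) + (B*Q*(dF i j) + A*Q*(dG i j))
      - A*B*(Polynomial.derivative Q)*(R i j), ?_⟩
  have expand : ((A * B * Q * Q : Polynomial ℂ) : PS) * d⁄dX ℂ x
      = ((A*B*Q : Polynomial ℂ) : PS) * (((Polynomial.derivative Q : Polynomial ℂ) : PS) * x + (Q : PS) * d⁄dX ℂ x)
        - ((A*B*(Polynomial.derivative Q) : Polynomial ℂ) : PS) * ((Q:PS) * x) := by
    simp only [Polynomial.coe_mul]; ring
  rw [expand, key, hx]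
  rw [mul_add, mul_dsum F G]
  rw [show ((A*B*Q : Polynomial ℂ) : PS) * ((∑ i : Fin (m+1), ∑ j : Fin (n+1), (R i j : PS) * (F ((i:ℕ)+1) * G j)) +
       (∑ i : Fin (m+1), ∑ j : Fin (n+1), (R i j : PS) * (F i * G ((j:ℕ)+1))))
     = ((B*Q : Polynomial ℂ) : PS) * ((A : PS) * (∑ i : Fin (m+1), ∑ j : Fin (n+1), (R i j : PS) * (F ((i:ℕ)+1) * G j)))
       + ((A*Q : Polynomial ℂ) : PS) * ((B : PS) * (∑ i : Fin (m+1), ∑ j : Fin (n+1), (R i j : PS) * (F i * G ((j:ℕ)+1)))) by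
     simp only [Polynomial.coe_mul]; ring]
  rw [hdF, hdG, mul_dsum F G, mul_dsum F G, mul_dsum F G]
  simp only [← Finset.sum_add_distrib, ← Finset.sum_sub_distrib]
  refine Finset.sum_congr rfl fun i _ => Finset.sum_congr rfl fun j _ => ?_
  simp only [coe_sub', Polynomial.coe_add, Polynomial.coe_mul]
  ring


lemma ratfunc_mul_denom (x : RatFunc ℂ) :
    x * algebraMap (Polynomial ℂ) (RatFunc ℂ) x.denom = algebraMap (Polynomial ℂ) (RatFunc ℂ) x.num := by
  have hnz : algebraMap (Polynomial ℂ) (RatFunc ℂ) x.denom ≠ 0 :=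
    RatFunc.algebraMap_ne_zero (RatFunc.denom_ne_zero x)
  rw [eq_comm, ← div_eq_iff hnz]
  exact RatFunc.num_div_denom x

lemma coe_sum {ι : Type*} (s : Finset ι) (p : ι → Polynomial ℂ) :
    ((∑ k ∈ s, p k : Polynomial ℂ) : PS) = ∑ k ∈ s, ((p k : Polynomial ℂ) : PS) := by
  rw [← Polynomial.coeToPowerSeries.ringHom_apply, map_sum]
  simp only [Polynomial.coeToPowerSeries.ringHom_apply]

end DFA


end

set_option maxHeartbeats 2000000 in
set_option synthInstance.maxHeartbeats 1000000 in
theorem isDFinite_mul {f g : PowerSeries ℂ} (r s : ℕ)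
    (a : Fin (r + 1) → Polynomial ℂ) (ha : a (Fin.last r) ≠ 0)
    (hf : ∑ i : Fin (r + 1), (a i : PowerSeries ℂ) * ((fun h => d⁄dX ℂ h)^[(i : ℕ)] f) = 0)
    (b : Fin (s + 1) → Polynomial ℂ) (hb : b (Fin.last s) ≠ 0)
    (hg : ∑ i : Fin (s + 1), (b i : PowerSeries ℂ) * ((fun h => d⁄dX ℂ h)^[(i : ℕ)] g) = 0) :
    ∃ c : Fin (r * s + 1) → Polynomial ℂ,
      (∃ i, c i ≠ 0) ∧
      ∑ i : Fin (r * s + 1), (c i : PowerSeries ℂ) * ((fun h => d⁄dX ℂ h)^[(i : ℕ)] (f * g)) = 0 := by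
  classical
  have hiter : ∀ n : ℕ, (fun h => d⁄dX ℂ h)^[n] (0 : PowerSeries ℂ) = 0 :=
    fun n => Function.iterate_fixed (map_zero (d⁄dX ℂ)) n
  obtain _ | r' := r
  · have hf0 : (a 0 : PowerSeries ℂ) * f = 0 := by simpa using hf
    have hfz : f = 0 := by
      rcases mul_eq_zero.mp hf0 with h | h
      · exact absurd (Polynomial.coe_eq_zero_iff.mp h) ha
      · exact h
    exact ⟨fun _ => 1, ⟨0, one_ne_zero⟩, by simp [hfz, hiter]⟩
  obtain _ | s' := s
  · have hg0 : (b 0 : PowerSeries ℂ) * g = 0 := by simpa using hg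
    have hgz : g = 0 := by
      rcases mul_eq_zero.mp hg0 with h | h
      · exact absurd (Polynomial.coe_eq_zero_iff.mp h) hb
      · exact h
    exact ⟨fun _ => 1, ⟨0, one_ne_zero⟩, by simp [hgz, hiter]⟩
  have hFstep : ∀ i : ℕ, (fun h => d⁄dX ℂ h)^[i + 1] f = d⁄dX ℂ ((fun h => d⁄dX ℂ h)^[i] f) :=
    fun i => Function.iterate_succ_apply' _ i f
  have hGstep : ∀ j : ℕ, (fun h => d⁄dX ℂ h)^[j + 1] g = d⁄dX ℂ ((fun h => d⁄dX ℂ h)^[j] g) :=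
    fun j => Function.iterate_succ_apply' _ j g
  have hA : ((a (Fin.last (r' + 1)) : Polynomial ℂ) : PowerSeries ℂ) * (fun h => d⁄dX ℂ h)^[r' + 1] f
      = ∑ i : Fin (r' + 1), ((-(a i.castSucc) : Polynomial ℂ) : PowerSeries ℂ) * (fun h => d⁄dX ℂ h)^[(i : ℕ)] f := by
    rw [Fin.sum_univ_castSucc] at hf
    simp only [Fin.coe_castSucc, Fin.val_last] at hf
    calc ((a (Fin.last (r' + 1)) : Polynomial ℂ) : PowerSeries ℂ) * (fun h => d⁄dX ℂ h)^[r' + 1] f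
        = -∑ i : Fin (r' + 1), ((a i.castSucc : Polynomial ℂ) : PowerSeries ℂ) * (fun h => d⁄dX ℂ h)^[(i : ℕ)] f :=
          eq_neg_of_add_eq_zero_right hf
      _ = _ := by
          rw [← Finset.sum_neg_distrib]
          exact Finset.sum_congr rfl fun i _ => by rw [DFA.coe_neg', neg_mul]
  have hB : ((b (Fin.last (s' + 1)) : Polynomial ℂ) : PowerSeries ℂ) * (fun h => d⁄dX ℂ h)^[s' + 1] g
      = ∑ j : Fin (s' + 1), ((-(b j.castSucc) : Polynomial ℂ) : PowerSeries ℂ) * (fun h => d⁄dX ℂ h)^[(j : ℕ)] g := by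
    rw [Fin.sum_univ_castSucc] at hg
    simp only [Fin.coe_castSucc, Fin.val_last] at hg
    calc ((b (Fin.last (s' + 1)) : Polynomial ℂ) : PowerSeries ℂ) * (fun h => d⁄dX ℂ h)^[s' + 1] g
        = -∑ j : Fin (s' + 1), ((b j.castSucc : Polynomial ℂ) : PowerSeries ℂ) * (fun h => d⁄dX ℂ h)^[(j : ℕ)] g :=
          eq_neg_of_add_eq_zero_right hg
      _ = _ := by
          rw [← Finset.sum_neg_distrib]
          exact Finset.sum_congr rfl fun j _ => by rw [DFA.coe_neg', neg_mul]
  have main : ∀ k : ℕ, ∃ Q : Polynomial ℂ, Q ≠ 0 ∧ ∃ R : Fin (r' + 1) → Fin (s' + 1) → Polynomial ℂ,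
      (Q : PowerSeries ℂ) * (fun h => d⁄dX ℂ h)^[k] (f * g)
        = ∑ i : Fin (r' + 1), ∑ j : Fin (s' + 1), (R i j : PowerSeries ℂ) *
            ((fun h => d⁄dX ℂ h)^[(i : ℕ)] f * (fun h => d⁄dX ℂ h)^[(j : ℕ)] g) := by
    intro k
    induction k with
    | zero =>
      refine ⟨1, one_ne_zero,
        fun i j => if i = 0 then (if j = 0 then 1 else 0) else 0, ?_⟩
      simp only [Function.iterate_zero, id_eq, Polynomial.coe_one, one_mul]
      rw [Finset.sum_eq_single (0 : Fin (r' + 1)) ?_ (by simp)]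
      · rw [Finset.sum_eq_single (0 : Fin (s' + 1)) ?_ (by simp)]
        · simp
        · intro j _ hj
          simp [hj]
      · intro i _ hi
        simp [hi]
    | succ k ih =>
      obtain ⟨Q, hQ0, R, hQR⟩ := ih
      obtain ⟨R', hR'⟩ := DFA.stepMul r' s' (fun i => (fun h => d⁄dX ℂ h)^[i] f)
        (fun j => (fun h => d⁄dX ℂ h)^[j] g) hFstep hGstep (a (Fin.last (r' + 1)))
        (b (Fin.last (s' + 1))) (fun i => -(a i.castSucc)) (fun j => -(b j.castSucc)) hA hB Q R
        ((fun h => d⁄dX ℂ h)^[k] (f * g)) hQR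
      refine ⟨_, mul_ne_zero (mul_ne_zero (mul_ne_zero ha hb) hQ0) hQ0, R', ?_⟩
      rw [Function.iterate_succ_apply']
      exact hR'
  choose Q hQ0 R hQR using fun k : Fin ((r' + 1) * (s' + 1) + 1) => main (k : ℕ)
  have hQtot0 : (∏ k : Fin ((r' + 1) * (s' + 1) + 1), Q k) ≠ 0 :=
    Finset.prod_ne_zero_iff.mpr fun k _ => hQ0 k
  have hk : ∀ k : Fin ((r' + 1) * (s' + 1) + 1),
      ((∏ l : Fin ((r' + 1) * (s' + 1) + 1), Q l : Polynomial ℂ) : PowerSeries ℂ) *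
          (fun h => d⁄dX ℂ h)^[(k : ℕ)] (f * g)
        = ∑ i : Fin (r' + 1), ∑ j : Fin (s' + 1),
            (((∏ l ∈ Finset.univ.erase k, Q l) * R k i j : Polynomial ℂ) : PowerSeries ℂ) *
            ((fun h => d⁄dX ℂ h)^[(i : ℕ)] f * (fun h => d⁄dX ℂ h)^[(j : ℕ)] g) := by
    intro k
    rw [← Finset.mul_prod_erase _ _ (Finset.mem_univ k), Polynomial.coe_mul,
      mul_comm ((Q k : PowerSeries ℂ)) _, mul_assoc, hQR k]
    exact DFA.mul_dsum (fun i => (fun h => d⁄dX ℂ h)^[i] f)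
      (fun j => (fun h => d⁄dX ℂ h)^[j] g) _ _
  have hnli : ¬ LinearIndependent (RatFunc ℂ)
      (fun k : Fin ((r' + 1) * (s' + 1) + 1) => fun p : Fin (r' + 1) × Fin (s' + 1) =>
        algebraMap (Polynomial ℂ) (RatFunc ℂ) ((∏ l ∈ Finset.univ.erase k, Q l) * R k p.1 p.2)) := by
    intro h
    have hcard := h.fintype_card_le_finrank
    rw [Module.finrank_fintype_fun_eq_card] at hcard
    simp only [Fintype.card_fin, Fintype.card_prod] at hcard
    omega
  obtain ⟨cc, hccsum, k0, hk0⟩ := Fintype.not_linearIndependent_iff.mp hnli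
  set c' : Fin ((r' + 1) * (s' + 1) + 1) → Polynomial ℂ :=
    fun k => (cc k).num * ∏ l ∈ Finset.univ.erase k, (cc l).denom with hc'def
  have hden : ∀ k, algebraMap (Polynomial ℂ) (RatFunc ℂ) (c' k)
      = cc k * algebraMap (Polynomial ℂ) (RatFunc ℂ)
          (∏ l : Fin ((r' + 1) * (s' + 1) + 1), (cc l).denom) := by
    intro k
    rw [show (∏ l : Fin ((r' + 1) * (s' + 1) + 1), (cc l).denom)
        = (cc k).denom * ∏ l ∈ Finset.univ.erase k, (cc l).denom from
      (Finset.mul_prod_erase _ _ (Finset.mem_univ k)).symm]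
    rw [hc'def, map_mul, map_mul]
    rw [show cc k * (algebraMap (Polynomial ℂ) (RatFunc ℂ) (cc k).denom *
        algebraMap (Polynomial ℂ) (RatFunc ℂ) (∏ l ∈ Finset.univ.erase k, (cc l).denom))
      = (cc k * algebraMap (Polynomial ℂ) (RatFunc ℂ) (cc k).denom) *
        algebraMap (Polynomial ℂ) (RatFunc ℂ) (∏ l ∈ Finset.univ.erase k, (cc l).denom) from by ring]
    rw [DFA.ratfunc_mul_denom]
  have hpoly : ∀ (i : Fin (r' + 1)) (j : Fin (s' + 1)),
      ∑ k : Fin ((r' + 1) * (s' + 1) + 1),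
        c' k * ((∏ l ∈ Finset.univ.erase k, Q l) * R k i j) = 0 := by
    intro i j
    refine RatFunc.algebraMap_injective ℂ ?_
    rw [map_sum, map_zero]
    have hcf := congrFun hccsum (i, j)
    simp only [Finset.sum_apply, Pi.smul_apply, smul_eq_mul, Pi.zero_apply] at hcf
    calc ∑ k : Fin ((r' + 1) * (s' + 1) + 1),
          algebraMap (Polynomial ℂ) (RatFunc ℂ) (c' k * ((∏ l ∈ Finset.univ.erase k, Q l) * R k i j))
        = ∑ k : Fin ((r' + 1) * (s' + 1) + 1), (cc k * algebraMap (Polynomial ℂ) (RatFunc ℂ)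
            ((∏ l ∈ Finset.univ.erase k, Q l) * R k i j)) *
            algebraMap (Polynomial ℂ) (RatFunc ℂ)
              (∏ l : Fin ((r' + 1) * (s' + 1) + 1), (cc l).denom) := by
          refine Finset.sum_congr rfl fun k _ => ?_
          rw [map_mul, hden k]; ring
      _ = (∑ k : Fin ((r' + 1) * (s' + 1) + 1), cc k * algebraMap (Polynomial ℂ) (RatFunc ℂ)
            ((∏ l ∈ Finset.univ.erase k, Q l) * R k i j)) *
            algebraMap (Polynomial ℂ) (RatFunc ℂ)
              (∏ l : Fin ((r' + 1) * (s' + 1) + 1), (cc l).denom) := by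
          rw [Finset.sum_mul]
      _ = 0 := by rw [hcf, zero_mul]
  have hc'k0 : c' k0 ≠ 0 :=
    mul_ne_zero (RatFunc.num_ne_zero hk0)
      (Finset.prod_ne_zero_iff.mpr fun l _ => RatFunc.denom_ne_zero (cc l))
  refine ⟨c', ⟨k0, hc'k0⟩, ?_⟩
  have hfinal : ((∏ l : Fin ((r' + 1) * (s' + 1) + 1), Q l : Polynomial ℂ) : PowerSeries ℂ) *
      ∑ k : Fin ((r' + 1) * (s' + 1) + 1), (c' k : PowerSeries ℂ) *
        (fun h => d⁄dX ℂ h)^[(k : ℕ)] (f * g) = 0 := by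
    rw [Finset.mul_sum]
    calc ∑ k : Fin ((r' + 1) * (s' + 1) + 1),
          ((∏ l : Fin ((r' + 1) * (s' + 1) + 1), Q l : Polynomial ℂ) : PowerSeries ℂ) *
            ((c' k : PowerSeries ℂ) * (fun h => d⁄dX ℂ h)^[(k : ℕ)] (f * g))
        = ∑ k : Fin ((r' + 1) * (s' + 1) + 1), ∑ i : Fin (r' + 1), ∑ j : Fin (s' + 1),
            ((c' k * ((∏ l ∈ Finset.univ.erase k, Q l) * R k i j) : Polynomial ℂ) : PowerSeries ℂ) *
            ((fun h => d⁄dX ℂ h)^[(i : ℕ)] f * (fun h => d⁄dX ℂ h)^[(j : ℕ)] g) := by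
          refine Finset.sum_congr rfl fun k _ => ?_
          rw [← mul_assoc,
            mul_comm (((∏ l : Fin ((r' + 1) * (s' + 1) + 1), Q l : Polynomial ℂ) : PowerSeries ℂ)) _,
            mul_assoc, hk k]
          exact DFA.mul_dsum (fun i => (fun h => d⁄dX ℂ h)^[i] f)
            (fun j => (fun h => d⁄dX ℂ h)^[j] g) _ _
      _ = ∑ i : Fin (r' + 1), ∑ j : Fin (s' + 1),
            ((∑ k : Fin ((r' + 1) * (s' + 1) + 1),
              c' k * ((∏ l ∈ Finset.univ.erase k, Q l) * R k i j) : Polynomial ℂ) : PowerSeries ℂ) *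
            ((fun h => d⁄dX ℂ h)^[(i : ℕ)] f * (fun h => d⁄dX ℂ h)^[(j : ℕ)] g) := by
          rw [Finset.sum_comm]
          refine Finset.sum_congr rfl fun i _ => ?_
          rw [Finset.sum_comm]
          refine Finset.sum_congr rfl fun j _ => ?_
          rw [← Finset.sum_mul, ← DFA.coe_sum]
      _ = 0 := Finset.sum_eq_zero fun i _ => Finset.sum_eq_zero fun j _ => by
          rw [hpoly i j, Polynomial.coe_zero, zero_mul]
  rcases mul_eq_zero.mp hfinal with h | h
  · exact absurd (Polynomial.coe_eq_zero_iff.mp h) hQtot0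
  · exact h
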